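/- For any bijection f : {0,1}^n → {1,...,2^n} and n ≥ 2, Σ_{j=1}^{2^n − 1} θ(n, f^{-1}({1,...,j})) ≥ Σ_{j=1}^{2^n − 1} θ(n, ξ_n^{-1}({1,...,j})) = 2^{2n−1} − 2^{n−1}; that is, the Gray code labeling minimizes the total edge boundary over all initial segments. -/
import Mathlib


open Finset

/-- Number of coordinates in which two 0-1 vectors differ. -/
def diffCount {n : ℕ} (u v : Fin n → Bool) : ℕ :=
  (Finset.univ.filter fun i => u i ≠ v i).card

/-- Adjacency in the hypercube `Q_n`: differ in exactly one coordinate. -/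
def cubeAdj {n : ℕ} (u v : Fin n → Bool) : Prop := diffCount u v = 1

instance {n : ℕ} (u v : Fin n → Bool) : Decidable (cubeAdj u v) :=
  inferInstanceAs (Decidable (diffCount u v = 1))

/-- `theta n S`: number of edges of `Q_n` with exactly one endpoint in `S`. -/
def theta (n : ℕ) (S : Finset (Fin n → Bool)) : ℕ :=
  ((Finset.univ ×ˢ Finset.univ).filter fun p : (Fin n → Bool) × (Fin n → Bool) =>
    p.1 ∈ S ∧ p.2 ∉ S ∧ cubeAdj p.1 p.2).card

/-- The reflected Gray code map `ξ_n : {0,1}^n → {1,...,2^n}`. -/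
def gray : (n : ℕ) → (Fin n → Bool) → ℕ
  | 0, _ => 1
  | n + 1, v =>
    if v 0 = false then gray n (fun i => v i.succ)
    else 2 ^ (n + 1) + 1 - gray n (fun i => v i.succ)

/-- Wirelength of an embedding `f` of `Q_n` into a host with distance `d`. -/
def wirelength {n : ℕ} {α : Type*} (d : α → α → ℕ) (f : (Fin n → Bool) → α) : ℕ :=
  (∑ u : Fin n → Bool, ∑ v : Fin n → Bool, if cubeAdj u v then d (f u) (f v) else 0) / 2

/-- Cyclic distance on the cycle with `m` vertices labeled `1,...,m`. -/
def cycDist (m a b : ℕ) : ℕ := min (Nat.dist a b) (m - Nat.dist a b)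

/-- The 2-order Gray code map. -/
def gray2 (n₁ n₂ : ℕ) (v : Fin (n₁ + n₂) → Bool) : ℕ × ℕ :=
  (gray n₁ fun i => v (Fin.castAdd n₂ i), gray n₂ fun i => v (Fin.natAdd n₁ i))

lemma diffCount_eq_sum {n : ℕ} (u v : Fin n → Bool) :
    diffCount u v = ∑ i, if u i ≠ v i then 1 else 0 :=
  Finset.card_filter _ _

lemma diffCount_comm {n : ℕ} (u v : Fin n → Bool) : diffCount u v = diffCount v u := by
  unfold diffCount; congr 1; ext i; simp [ne_comm]

lemma cubeAdj_comm {n : ℕ} (u v : Fin n → Bool) : cubeAdj u v ↔ cubeAdj v u := by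
  unfold cubeAdj; rw [diffCount_comm]

lemma diffCount_eq_zero {n : ℕ} {u v : Fin n → Bool} : diffCount u v = 0 ↔ u = v := by
  constructor
  · intro h; funext i
    by_contra hne
    have hi : i ∈ Finset.univ.filter fun i => u i ≠ v i := by simp [hne]
    unfold diffCount at h
    rw [Finset.card_eq_zero] at h
    simp [h] at hi
  · rintro rfl; simp [diffCount]

lemma flip_adj {n : ℕ} (u : Fin n → Bool) (i : Fin n) :
    cubeAdj u (Function.update u i (!(u i))) := by
  unfold cubeAdj diffCount
  rw [Finset.card_eq_one]
  refine ⟨i, ?_⟩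
  ext j
  by_cases hj : j = i
  · subst hj; simp [Function.update_self]
  · simp [Function.update_of_ne hj, hj]

lemma deg {n : ℕ} (u : Fin n → Bool) : (univ.filter fun v => cubeAdj u v).card = n := by
  have himg : (univ.filter fun v => cubeAdj u v)
      = univ.image (fun i : Fin n => Function.update u i (!(u i))) := by
    ext v
    simp only [mem_filter, mem_univ, true_and, mem_image]
    constructor
    · intro hv
      obtain ⟨i, hi⟩ := Finset.card_eq_one.mp hv
      refine ⟨i, ?_⟩
      have hiu : u i ≠ v i := by
        have : i ∈ Finset.univ.filter fun j => u j ≠ v j := hi ▸ Finset.mem_singleton_self i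
        simpa using this
      funext j
      by_cases hj : j = i
      · subst hj
        rw [Function.update_self]
        cases hu : u j <;> cases hv' : v j <;> simp_all
      · rw [Function.update_of_ne hj]
        by_contra hne
        have hj' : j ∈ Finset.univ.filter fun k => u k ≠ v k := by
          simp [hne]
        rw [hi] at hj'
        simp [hj] at hj'
    · rintro ⟨i, rfl⟩; exact flip_adj u i
  rw [himg, Finset.card_image_of_injective _ ?_, card_univ, Fintype.card_fin]
  intro i j hij
  by_contra hne
  have h : Function.update u i (!(u i)) j = Function.update u j (!(u j)) j := congrFun hij j
  rw [Function.update_of_ne (Ne.symm hne), Function.update_self] at h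
  simp at h

lemma deg_sum {n : ℕ} (u : Fin n → Bool) :
    (∑ v : Fin n → Bool, if cubeAdj u v then 1 else 0) = n := by
  rw [← Finset.card_filter]; exact deg u

lemma diffCount_cons {n : ℕ} (b c : Bool) (u v : Fin n → Bool) :
    diffCount (Fin.cons b u) (Fin.cons c v) = (if b = c then 0 else 1) + diffCount u v := by
  rw [diffCount_eq_sum, Fin.sum_univ_succ, diffCount_eq_sum]
  simp [Fin.cons_zero, Fin.cons_succ]

lemma cubeAdj_cons {n : ℕ} (b c : Bool) (u v : Fin n → Bool) :
    cubeAdj (Fin.cons b u) (Fin.cons c v) ↔ (if b = c then cubeAdj u v else u = v) := by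
  unfold cubeAdj
  rw [diffCount_cons]
  by_cases h : b = c
  · simp [h]
  · simp [h, diffCount_eq_zero]

def sB (k : ℕ) : ℕ := (Nat.digits 2 k).sum

def B (k : ℕ) : ℕ := ∑ i ∈ Finset.range k, sB i

lemma sB_zero : sB 0 = 0 := by simp [sB]

lemma sB_two_mul (m : ℕ) : sB (2 * m) = sB m := by
  rcases Nat.eq_zero_or_pos m with rfl | hm
  · rfl
  · unfold sB
    rw [Nat.digits_def' (by norm_num : (1:ℕ) < 2) (by omega : 0 < 2 * m)]
    simp [Nat.mul_div_cancel_left _ (by norm_num : 0 < 2), Nat.mul_mod_right]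

lemma sB_two_mul_add_one (m : ℕ) : sB (2 * m + 1) = sB m + 1 := by
  unfold sB
  rw [Nat.digits_def' (by norm_num : (1:ℕ) < 2) (by omega : 0 < 2 * m + 1)]
  have h1 : (2 * m + 1) % 2 = 1 := by omega
  have h2 : (2 * m + 1) / 2 = m := by omega
  rw [h1, h2]
  simp [Nat.add_comm]

lemma sum_range_two_mul {M : Type*} [AddCommMonoid M] (f : ℕ → M) (m : ℕ) :
    ∑ i ∈ range (2 * m), f i = ∑ i ∈ range m, (f (2 * i) + f (2 * i + 1)) := by
  induction m with
  | zero => simp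
  | succ m ih =>
      have h : 2 * (m + 1) = (2 * m) + 1 + 1 := by ring
      rw [h, Finset.sum_range_succ, Finset.sum_range_succ, ih, Finset.sum_range_succ,
        add_assoc]

lemma B_two_mul (m : ℕ) : B (2 * m) = 2 * B m + m := by
  unfold B
  rw [sum_range_two_mul]
  have : ∀ i ∈ range m, sB (2 * i) + sB (2 * i + 1) = 2 * sB i + 1 := by
    intro i _
    rw [sB_two_mul, sB_two_mul_add_one]; ring
  rw [Finset.sum_congr rfl this, Finset.sum_add_distrib]
  simp [Finset.mul_sum]

lemma B_succ (m : ℕ) : B (m + 1) = B m + sB m := Finset.sum_range_succ _ _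

lemma B_two_mul_add_one (m : ℕ) : B (2 * m + 1) = B m + B (m + 1) + m := by
  rw [B_succ, B_two_mul, sB_two_mul, B_succ]; ring

lemma B_zero : B 0 = 0 := rfl
lemma B_one : B 1 = 0 := by simp [B, sB_zero]

lemma B_superadd_aux : ∀ s a b, a + b ≤ s → a ≤ b → B a + B b + a ≤ B (a + b) := by
  intro s
  induction s using Nat.strong_induction_on with
  | _ s ih =>
    intro a b hs hab
    rcases Nat.eq_zero_or_pos a with rfl | ha
    · simp [B_zero]
    rcases Nat.even_or_odd a with ⟨x, hx⟩ | ⟨x, hx⟩ <;>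
      rcases Nat.even_or_odd b with ⟨y, hy⟩ | ⟨y, hy⟩
    · -- a = 2x, b = 2y
      subst hx; subst hy
      have hxy : x ≤ y := by omega
      have h1 : B x + B y + x ≤ B (x + y) := by
        refine ih (x + y) (by omega) x y le_rfl hxy
      have e1 : B (x + x + (y + y)) = 2 * B (x + y) + (x + y) := by
        rw [show x + x + (y + y) = 2 * (x + y) by ring, B_two_mul]
      have e2 : B (x + x) = 2 * B x + x := by rw [show x + x = 2 * x by ring, B_two_mul]
      have e3 : B (y + y) = 2 * B y + y := by rw [show y + y = 2 * y by ring, B_two_mul]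
      omega
    · -- a = 2x, b = 2y+1
      subst hx; subst hy
      have hxy : x ≤ y := by omega
      have h1 : B x + B y + x ≤ B (x + y) := ih (x + y) (by omega) x y le_rfl hxy
      have h2 : B x + B (y + 1) + x ≤ B (x + (y + 1)) :=
        ih (x + (y + 1)) (by omega) x (y + 1) le_rfl (by omega)
      have e1 : B (x + x + (2 * y + 1)) = B (x + y) + B (x + y + 1) + (x + y) := by
        rw [show x + x + (2 * y + 1) = 2 * (x + y) + 1 by ring, B_two_mul_add_one]
      have e2 : B (x + x) = 2 * B x + x := by rw [show x + x = 2 * x by ring, B_two_mul]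
      have e3 : B (2 * y + 1) = B y + B (y + 1) + y := B_two_mul_add_one y
      have e4 : x + (y + 1) = x + y + 1 := by ring
      rw [e4] at h2
      omega
    · -- a = 2x+1, b = 2y
      subst hx; subst hy
      have hxy : x < y := by omega
      have h1 : B x + B y + x ≤ B (x + y) := ih (x + y) (by omega) x y le_rfl (by omega)
      have h2 : B (x + 1) + B y + (x + 1) ≤ B ((x + 1) + y) :=
        ih ((x + 1) + y) (by omega) (x + 1) y le_rfl (by omega)
      have e1 : B (2 * x + 1 + (y + y)) = B (x + y) + B (x + y + 1) + (x + y) := by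
        rw [show 2 * x + 1 + (y + y) = 2 * (x + y) + 1 by ring, B_two_mul_add_one]
      have e2 : B (2 * x + 1) = B x + B (x + 1) + x := B_two_mul_add_one x
      have e3 : B (y + y) = 2 * B y + y := by rw [show y + y = 2 * y by ring, B_two_mul]
      have e4 : x + 1 + y = x + y + 1 := by ring
      rw [e4] at h2
      omega
    · -- a = 2x+1, b = 2y+1
      subst hx; subst hy
      have hxy : x ≤ y := by omega
      have h1 : B x + B (y + 1) + x ≤ B (x + (y + 1)) :=
        ih (x + (y + 1)) (by omega) x (y + 1) le_rfl (by omega)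
      have h2 : B (x + 1) + B y + x ≤ B (x + y + 1) := by
        rcases le_or_gt (x + 1) y with h | h
        · have := ih ((x + 1) + y) (by omega) (x + 1) y le_rfl h
          have e : x + 1 + y = x + y + 1 := by ring
          rw [e] at this; omega
        · have := ih (y + (x + 1)) (by omega) y (x + 1) le_rfl (by omega)
          have e : y + (x + 1) = x + y + 1 := by ring
          rw [e] at this; omega
      have e1 : B (2 * x + 1 + (2 * y + 1)) = 2 * B (x + y + 1) + (x + y + 1) := by
        rw [show 2 * x + 1 + (2 * y + 1) = 2 * (x + y + 1) by ring, B_two_mul]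
      have e2 : B (2 * x + 1) = B x + B (x + 1) + x := B_two_mul_add_one x
      have e3 : B (2 * y + 1) = B y + B (y + 1) + y := B_two_mul_add_one y
      have e4 : x + (y + 1) = x + y + 1 := by ring
      rw [e4] at h1
      omega

lemma B_superadd (a b : ℕ) : B a + B b + min a b ≤ B (a + b) := by
  rcases le_total a b with h | h
  · have := B_superadd_aux (a + b) a b le_rfl h
    omega
  · have := B_superadd_aux (a + b) b a (by omega) h
    rw [Nat.add_comm b a] at this
    omega

def eSum {n : ℕ} (S : Finset (Fin n → Bool)) : ℕ :=
  ∑ u ∈ S, ∑ v ∈ S, if cubeAdj u v then 1 else 0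

lemma eSum_le : ∀ (n : ℕ) (S : Finset (Fin n → Bool)), eSum S ≤ 2 * B S.card := by
  intro n
  induction n with
  | zero =>
      intro S
      have h0 : ∀ u v : Fin 0 → Bool, ¬ cubeAdj u v := by
        intro u v h
        unfold cubeAdj diffCount at h
        simp at h
      unfold eSum
      simp only [h0, if_false]
      simp
  | succ n ih =>
      intro S
      classical
      set Af := S.filter (fun v => v 0 = false) with hAf
      set At := S.filter (fun v => v 0 = true) with hAt
      set T0 := Af.image Fin.tail with hT0
      set T1 := At.image Fin.tail with hT1
      have hinj : ∀ b : Bool, ∀ x ∈ S.filter (fun v => v 0 = b), ∀ y ∈ S.filter (fun v => v 0 = b),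
          Fin.tail x = Fin.tail y → x = y := by
        intro b x hx y hy h
        rw [mem_filter] at hx hy
        have h2 : Fin.cons (x 0) (Fin.tail x) = Fin.cons (y 0) (Fin.tail y) := by
          rw [hx.2, hy.2, h]
        rwa [Fin.cons_self_tail, Fin.cons_self_tail] at h2
      have hcard0 : T0.card = Af.card := Finset.card_image_of_injOn (hinj false)
      have hcard1 : T1.card = At.card := Finset.card_image_of_injOn (hinj true)
      have hcards : T0.card + T1.card = S.card := by
        rw [hcard0, hcard1, hAf, hAt]
        have h := Finset.card_filter_add_card_filter_not
          (s := S) (p := fun v => v 0 = false)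
        simp only [Bool.not_eq_false] at h
        convert h using 3
      -- pointwise description of the edge indicator
      have hadj : ∀ u v : Fin (n+1) → Bool,
          (if cubeAdj u v then (1:ℕ) else 0) =
          (if u 0 = v 0 then (if cubeAdj (Fin.tail u) (Fin.tail v) then 1 else 0)
            else (if Fin.tail u = Fin.tail v then 1 else 0)) := by
        intro u v
        have hu : u = Fin.cons (u 0) (Fin.tail u) := (Fin.cons_self_tail u).symm
        have hv : v = Fin.cons (v 0) (Fin.tail v) := (Fin.cons_self_tail v).symm
        have hiff : cubeAdj u v ↔ (if u 0 = v 0 then cubeAdj (Fin.tail u) (Fin.tail v)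
            else Fin.tail u = Fin.tail v) := by
          nth_rewrite 1 [hu]
          nth_rewrite 1 [hv]
          rw [cubeAdj_cons]
        by_cases h : u 0 = v 0
        · simp only [h, if_true] at hiff ⊢
          simp [hiff]
        · simp only [h, if_false] at hiff ⊢
          simp [hiff]
      -- split the double sum into four blocks
      have hSsplit : ∀ g : (Fin (n+1) → Bool) → ℕ,
          ∑ v ∈ S, g v = ∑ v ∈ Af, g v + ∑ v ∈ At, g v := by
        intro g
        rw [hAf, hAt]
        have h := Finset.sum_filter_add_sum_filter_not S (fun v => v 0 = false) g
        rw [← h]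
        congr 2
        ext v
        simp
      have hsplit : eSum S =
          ((∑ u ∈ Af, ∑ v ∈ Af, if cubeAdj u v then 1 else 0)
            + ∑ u ∈ Af, ∑ v ∈ At, if cubeAdj u v then 1 else 0)
          + ((∑ u ∈ At, ∑ v ∈ Af, if cubeAdj u v then 1 else 0)
            + ∑ u ∈ At, ∑ v ∈ At, if cubeAdj u v then 1 else 0) := by
        unfold eSum
        rw [hSsplit (fun u => ∑ v ∈ S, if cubeAdj u v then 1 else 0)]
        congr 1
        · rw [← Finset.sum_add_distrib]
          exact Finset.sum_congr rfl fun u _ => hSsplit _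
        · rw [← Finset.sum_add_distrib]
          exact Finset.sum_congr rfl fun u _ => hSsplit _
      -- diagonal blocks
      have hdiag : ∀ b : Bool,
          (∑ u ∈ S.filter (fun v => v 0 = b), ∑ v ∈ S.filter (fun v => v 0 = b),
            if cubeAdj u v then (1:ℕ) else 0)
          = eSum ((S.filter (fun v => v 0 = b)).image Fin.tail) := by
        intro b
        unfold eSum
        rw [Finset.sum_image (hinj b)]
        refine Finset.sum_congr rfl fun u hu => ?_
        rw [Finset.sum_image (hinj b)]
        refine Finset.sum_congr rfl fun v hv => ?_
        rw [mem_filter] at hu hv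
        rw [hadj u v, hu.2, hv.2]
        simp
      have hFF : (∑ u ∈ Af, ∑ v ∈ Af, if cubeAdj u v then (1:ℕ) else 0) = eSum T0 := hdiag false
      have hTT : (∑ u ∈ At, ∑ v ∈ At, if cubeAdj u v then (1:ℕ) else 0) = eSum T1 := hdiag true
      -- off-diagonal blocks
      have hoff : ∀ b c : Bool, b ≠ c →
          (∑ u ∈ S.filter (fun v => v 0 = b), ∑ v ∈ S.filter (fun v => v 0 = c),
            if cubeAdj u v then (1:ℕ) else 0)
          = (((S.filter (fun v => v 0 = b)).image Fin.tail)
              ∩ ((S.filter (fun v => v 0 = c)).image Fin.tail)).card := by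
        intro b c hbc
        have step1 : ∀ u ∈ S.filter (fun v => v 0 = b),
            (∑ v ∈ S.filter (fun v => v 0 = c), if cubeAdj u v then (1:ℕ) else 0)
            = if Fin.tail u ∈ (S.filter (fun v => v 0 = c)).image Fin.tail then (1:ℕ) else 0 := by
          intro u hu
          rw [mem_filter] at hu
          have hper : ∀ v ∈ S.filter (fun w => w 0 = c),
              (if cubeAdj u v then (1:ℕ) else 0)
              = if Fin.tail u = Fin.tail v then 1 else 0 := by
            intro v hv
            rw [mem_filter] at hv
            rw [hadj u v, hu.2, hv.2]
            simp [hbc]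
          rw [Finset.sum_congr rfl hper, ← Finset.sum_image (hinj c) (f := fun y =>
            if Fin.tail u = y then (1:ℕ) else 0), Finset.sum_ite_eq]
        rw [Finset.sum_congr rfl step1,
          ← Finset.sum_image (hinj b) (f := fun x =>
            if x ∈ (S.filter (fun v => v 0 = c)).image Fin.tail then (1:ℕ) else 0),
          Finset.sum_ite_mem, Finset.sum_const, smul_eq_mul, mul_one]
      have hFT : (∑ u ∈ Af, ∑ v ∈ At, if cubeAdj u v then (1:ℕ) else 0) = (T0 ∩ T1).card :=
        hoff false true (by simp)
      have hTF : (∑ u ∈ At, ∑ v ∈ Af, if cubeAdj u v then (1:ℕ) else 0) = (T1 ∩ T0).card :=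
        hoff true false (by simp)
      have hIT : (T1 ∩ T0).card = (T0 ∩ T1).card := by rw [Finset.inter_comm]
      have b0 := ih T0
      have b1 := ih T1
      have hmin : (T0 ∩ T1).card ≤ min T0.card T1.card :=
        le_min (Finset.card_le_card Finset.inter_subset_left)
          (Finset.card_le_card Finset.inter_subset_right)
      have hsup := B_superadd T0.card T1.card
      rw [← hcards]
      omega


def consE (n : ℕ) : Bool × (Fin n → Bool) ≃ (Fin (n+1) → Bool) where
  toFun p := Fin.cons p.1 p.2
  invFun v := (v 0, Fin.tail v)
  left_inv p := by
    cases p with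
    | mk b w => simp [Fin.tail_cons]
  right_inv v := Fin.cons_self_tail v

lemma sum_split {M : Type*} [AddCommMonoid M] (n : ℕ) (F : (Fin (n+1) → Bool) → M) :
    ∑ v, F v = (∑ w : Fin n → Bool, F (Fin.cons false w))
      + ∑ w : Fin n → Bool, F (Fin.cons true w) := by
  rw [← Fintype.sum_equiv (consE n) (fun p => F (Fin.cons p.1 p.2)) F (fun p => rfl),
    Fintype.sum_prod_type, Fintype.sum_bool, add_comm]

lemma tail_eval {n : ℕ} (b : Bool) (w : Fin n → Bool) :
    (fun i : Fin n => (Fin.cons b w : Fin (n+1) → Bool) i.succ) = w :=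
  funext fun i => by simp

lemma gray_cons_false {n : ℕ} (w : Fin n → Bool) :
    gray (n+1) (Fin.cons false w) = gray n w := by
  simp [gray, tail_eval]

lemma gray_cons_true {n : ℕ} (w : Fin n → Bool) :
    gray (n+1) (Fin.cons true w) = 2^(n+1) + 1 - gray n w := by
  simp [gray, tail_eval]

lemma cubeAdj_cons_same {n : ℕ} (b : Bool) (x y : Fin n → Bool) :
    cubeAdj (Fin.cons b x) (Fin.cons b y) ↔ cubeAdj x y := by
  rw [cubeAdj_cons]; simp

lemma cubeAdj_cons_diff {n : ℕ} {b c : Bool} (h : b ≠ c) (x y : Fin n → Bool) :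
    cubeAdj (Fin.cons b x) (Fin.cons c y) ↔ x = y := by
  rw [cubeAdj_cons]; simp [h]

lemma gray_bounds : ∀ (n : ℕ) (v : Fin n → Bool), 1 ≤ gray n v ∧ gray n v ≤ 2^n := by
  intro n
  induction n with
  | zero => intro v; simp [gray]
  | succ n ih =>
      intro v
      have h := ih (fun i => v i.succ)
      have hp : 2^(n+1) = 2^n * 2 := pow_succ 2 n
      by_cases h0 : v 0 = false <;> simp [gray, h0] <;> omega

lemma card_bool_fun (n : ℕ) : (Finset.univ : Finset (Fin n → Bool)).card = 2^n := by
  rw [Finset.card_univ]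
  simp

lemma gray_total (n : ℕ) :
    2 * (∑ v : Fin n → Bool, gray n v) = 2^n * (2^n + 1) := by
  cases n with
  | zero =>
      simp [gray]
  | succ n =>
      rw [sum_split n (gray (n+1))]
      simp only [gray_cons_false, gray_cons_true]
      have key : (∑ w : Fin n → Bool, gray n w)
          + (∑ w : Fin n → Bool, (2^(n+1) + 1 - gray n w)) = 2^n * (2^(n+1) + 1) := by
        rw [← Finset.sum_add_distrib]
        have hper : ∀ w : Fin n → Bool, gray n w + (2^(n+1) + 1 - gray n w) = 2^(n+1) + 1 := by
          intro w
          have hb := gray_bounds n w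
          have hp : 2^(n+1) = 2^n * 2 := pow_succ 2 n
          omega
        rw [Finset.sum_congr rfl (fun w _ => hper w), Finset.sum_const, card_bool_fun,
          smul_eq_mul]
      have hp : 2^(n+1) = 2^n * 2 := pow_succ 2 n
      set G := ∑ w : Fin n → Bool, gray n w
      set A := ∑ w : Fin n → Bool, (2^(n+1) + 1 - gray n w)
      rw [hp] at key ⊢
      nlinarith [key]

def grayW (n : ℕ) : ℕ :=
  ∑ u : Fin n → Bool, ∑ v : Fin n → Bool, if cubeAdj u v then gray n v - gray n u else 0

lemma cubeAdj_zero (u v : Fin 0 → Bool) : ¬ cubeAdj u v := by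
  intro h
  unfold cubeAdj diffCount at h
  simp at h

lemma grayW_val : ∀ n : ℕ, 2 * grayW n = 2^n * (2^n - 1) := by
  intro n
  induction n with
  | zero =>
      unfold grayW
      simp [cubeAdj_zero]
  | succ n ih =>
      unfold grayW
      rw [sum_split n (fun u => ∑ v : Fin (n+1) → Bool,
        if cubeAdj u v then gray (n+1) v - gray (n+1) u else 0)]
      have hinner : ∀ b : Bool, ∀ x : Fin n → Bool,
          (∑ v : Fin (n+1) → Bool,
            if cubeAdj (Fin.cons b x) v then gray (n+1) v - gray (n+1) (Fin.cons b x) else 0)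
          = (∑ y : Fin n → Bool, if cubeAdj (Fin.cons b x) (Fin.cons false y) then
              gray (n+1) (Fin.cons false y) - gray (n+1) (Fin.cons b x) else 0)
            + ∑ y : Fin n → Bool, if cubeAdj (Fin.cons b x) (Fin.cons true y) then
              gray (n+1) (Fin.cons true y) - gray (n+1) (Fin.cons b x) else 0 := by
        intro b x
        exact sum_split n _
      simp only [hinner]
      rw [Finset.sum_add_distrib, Finset.sum_add_distrib]
      have hFF : (∑ x : Fin n → Bool, ∑ y : Fin n → Bool,
          if cubeAdj (Fin.cons false x) (Fin.cons false y) then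
            gray (n+1) (Fin.cons false y) - gray (n+1) (Fin.cons false x) else 0) = grayW n := by
        unfold grayW
        refine Finset.sum_congr rfl fun x _ => Finset.sum_congr rfl fun y _ => ?_
        rw [gray_cons_false, gray_cons_false]
        by_cases h : cubeAdj x y
        · rw [if_pos ((cubeAdj_cons_same false x y).mpr h), if_pos h]
        · rw [if_neg (fun hc => h ((cubeAdj_cons_same false x y).mp hc)), if_neg h]
      have hTT : (∑ x : Fin n → Bool, ∑ y : Fin n → Bool,
          if cubeAdj (Fin.cons true x) (Fin.cons true y) then
            gray (n+1) (Fin.cons true y) - gray (n+1) (Fin.cons true x) else 0) = grayW n := by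
        have step : ∀ x y : Fin n → Bool,
            (if cubeAdj (Fin.cons true x) (Fin.cons true y) then
              gray (n+1) (Fin.cons true y) - gray (n+1) (Fin.cons true x) else 0)
            = if cubeAdj x y then gray n x - gray n y else 0 := by
          intro x y
          rw [gray_cons_true, gray_cons_true]
          by_cases h : cubeAdj x y
          · rw [if_pos ((cubeAdj_cons_same true x y).mpr h), if_pos h]
            have hbx := gray_bounds n x
            have hby := gray_bounds n y
            have hp : 2^(n+1) = 2^n * 2 := pow_succ 2 n
            omega
          · rw [if_neg (fun hc => h ((cubeAdj_cons_same true x y).mp hc)), if_neg h]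
        simp only [step]
        rw [Finset.sum_comm]
        unfold grayW
        refine Finset.sum_congr rfl fun y _ => Finset.sum_congr rfl fun x _ => ?_
        by_cases h : cubeAdj y x
        · rw [if_pos ((cubeAdj_comm y x).mp h), if_pos h]
        · rw [if_neg (fun hc => h ((cubeAdj_comm x y).mp hc)), if_neg h]
      have hFT : (∑ x : Fin n → Bool, ∑ y : Fin n → Bool,
          if cubeAdj (Fin.cons false x) (Fin.cons true y) then
            gray (n+1) (Fin.cons true y) - gray (n+1) (Fin.cons false x) else 0)
          = ∑ x : Fin n → Bool, ((2^(n+1) + 1 - gray n x) - gray n x) := by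
        refine Finset.sum_congr rfl fun x _ => ?_
        have step : ∀ y : Fin n → Bool,
            (if cubeAdj (Fin.cons false x) (Fin.cons true y) then
              gray (n+1) (Fin.cons true y) - gray (n+1) (Fin.cons false x) else 0)
            = if x = y then (2^(n+1) + 1 - gray n y) - gray n x else 0 := by
          intro y
          rw [gray_cons_true, gray_cons_false]
          have hiff := cubeAdj_cons_diff (by simp : (false:Bool) ≠ true) x y
          by_cases h : x = y
          · rw [if_pos (hiff.mpr h), if_pos h]
          · rw [if_neg (fun hc => h (hiff.mp hc)), if_neg h]
        simp only [step]
        rw [Finset.sum_ite_eq]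
        simp
      have hTF : (∑ x : Fin n → Bool, ∑ y : Fin n → Bool,
          if cubeAdj (Fin.cons true x) (Fin.cons false y) then
            gray (n+1) (Fin.cons false y) - gray (n+1) (Fin.cons true x) else 0) = 0 := by
        refine Finset.sum_eq_zero fun x _ => ?_
        refine Finset.sum_eq_zero fun y _ => ?_
        by_cases h : cubeAdj (Fin.cons true x) (Fin.cons false y)
        · rw [if_pos h]
          have hxy : x = y := (cubeAdj_cons_diff (by simp : (true:Bool) ≠ false) x y).mp h
          subst hxy
          rw [gray_cons_false, gray_cons_true]
          have hb := gray_bounds n x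
          have hp : 2^(n+1) = 2^n * 2 := pow_succ 2 n
          omega
        · rw [if_neg h]
      rw [hFF, hTT, hFT, hTF]
      -- arithmetic
      have hA : (∑ x : Fin n → Bool, ((2^(n+1) + 1 - gray n x) - gray n x))
          + 2 * (∑ x : Fin n → Bool, gray n x) = 2^n * (2^(n+1) + 1) := by
        rw [Finset.mul_sum, ← Finset.sum_add_distrib]
        have hper : ∀ x : Fin n → Bool,
            ((2^(n+1) + 1 - gray n x) - gray n x) + 2 * gray n x = 2^(n+1) + 1 := by
          intro x
          have hb := gray_bounds n x
          have hp : 2^(n+1) = 2^n * 2 := pow_succ 2 n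
          omega
        rw [Finset.sum_congr rfl (fun x _ => hper x), Finset.sum_const, card_bool_fun,
          smul_eq_mul]
      have hG := gray_total n
      have hp : 2^(n+1) = 2^n * 2 := pow_succ 2 n
      have h1 : (1:ℕ) ≤ 2^n := Nat.one_le_two_pow
      set A := ∑ x : Fin n → Bool, ((2^(n+1) + 1 - gray n x) - gray n x) with hAdef
      set G := ∑ x : Fin n → Bool, gray n x with hGdef
      set W := grayW n with hWdef
      rw [hp] at hA ⊢
      zify [h1, show (1:ℕ) ≤ 2^n * 2 by omega] at ih hA hG ⊢
      nlinarith [ih, hA, hG]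


lemma theta_double_sum (n : ℕ) (S : Finset (Fin n → Bool)) :
    theta n S = ∑ u : Fin n → Bool, ∑ v : Fin n → Bool,
      if u ∈ S ∧ v ∉ S ∧ cubeAdj u v then 1 else 0 := by
  unfold theta
  rw [Finset.card_filter, Finset.sum_product]

lemma sum_mem_eq {α : Type*} [Fintype α] [DecidableEq α] (S : Finset α) (X : α → ℕ) :
    ∑ u ∈ S, X u = ∑ u : α, if u ∈ S then X u else 0 := by
  rw [Finset.sum_ite_mem, Finset.univ_inter]

lemma eSum_double {n : ℕ} (S : Finset (Fin n → Bool)) :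
    eSum S = ∑ u : Fin n → Bool, ∑ v : Fin n → Bool,
      if u ∈ S ∧ v ∈ S ∧ cubeAdj u v then 1 else 0 := by
  unfold eSum
  rw [sum_mem_eq]
  refine Finset.sum_congr rfl fun u _ => ?_
  by_cases hu : u ∈ S
  · simp only [hu, if_true, true_and]
    rw [sum_mem_eq]
    refine Finset.sum_congr rfl fun v _ => ?_
    by_cases hv : v ∈ S <;> simp [hv]
  · simp [hu]

lemma theta_handshake {n : ℕ} (S : Finset (Fin n → Bool)) :
    theta n S + eSum S = n * S.card := by
  rw [theta_double_sum, eSum_double, ← Finset.sum_add_distrib]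
  have key : ∀ u : Fin n → Bool,
      ((∑ v : Fin n → Bool, if u ∈ S ∧ v ∉ S ∧ cubeAdj u v then 1 else 0)
        + ∑ v : Fin n → Bool, if u ∈ S ∧ v ∈ S ∧ cubeAdj u v then 1 else 0)
      = if u ∈ S then n else 0 := by
    intro u
    rw [← Finset.sum_add_distrib]
    by_cases hu : u ∈ S
    · rw [if_pos hu]
      have hper : ∀ v : Fin n → Bool,
          ((if u ∈ S ∧ v ∉ S ∧ cubeAdj u v then (1:ℕ) else 0)
            + if u ∈ S ∧ v ∈ S ∧ cubeAdj u v then 1 else 0)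
          = if cubeAdj u v then 1 else 0 := by
        intro v
        by_cases hv : v ∈ S <;> by_cases ha : cubeAdj u v <;> simp [hu, hv, ha]
      rw [Finset.sum_congr rfl (fun v _ => hper v)]
      exact deg_sum u
    · simp [hu]
  rw [Finset.sum_congr rfl (fun u _ => key u), Finset.sum_ite_mem, Finset.univ_inter,
    Finset.sum_const, smul_eq_mul, mul_comm]

lemma card_level {n : ℕ} {f : (Fin n → Bool) → ℕ}
    (hf : Set.BijOn f Set.univ (Set.Icc 1 (2 ^ n))) {j : ℕ} (hj : j ≤ 2^n) :
    (Finset.univ.filter fun v => f v ∈ Finset.Icc 1 j).card = j := by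
  have h : (Finset.univ.filter fun v => f v ∈ Finset.Icc 1 j).card = (Finset.Icc 1 j).card := by
    apply Finset.card_bij (fun v _ => f v)
    · intro v hv
      exact (Finset.mem_filter.mp hv).2
    · intro v1 _ v2 _ he
      exact hf.injOn (Set.mem_univ _) (Set.mem_univ _) he
    · intro y hy
      rw [Finset.mem_Icc] at hy
      have hy' : y ∈ Set.Icc 1 (2^n) := by
        rw [Set.mem_Icc]
        have h1 : (1:ℕ) ≤ 2^n := Nat.one_le_two_pow
        omega
      obtain ⟨v, -, hv⟩ := hf.surjOn hy'
      refine ⟨v, Finset.mem_filter.mpr ⟨Finset.mem_univ _, ?_⟩, hv⟩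
      rw [hv, Finset.mem_Icc]
      omega
  rw [h, Nat.card_Icc]
  omega

lemma sum_theta_g (n : ℕ) (g : (Fin n → Bool) → ℕ) (hg : ∀ v, 1 ≤ g v ∧ g v ≤ 2^n) :
    (∑ j ∈ Finset.Icc 1 (2^n - 1), theta n (Finset.univ.filter fun v => g v ∈ Finset.Icc 1 j))
    = ∑ u : Fin n → Bool, ∑ v : Fin n → Bool, if cubeAdj u v then g v - g u else 0 := by
  have step1 : ∀ j, theta n (Finset.univ.filter fun v => g v ∈ Finset.Icc 1 j)
      = ∑ u : Fin n → Bool, ∑ v : Fin n → Bool,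
        if g u ∈ Finset.Icc 1 j ∧ g v ∉ Finset.Icc 1 j ∧ cubeAdj u v then 1 else 0 := by
    intro j
    rw [theta_double_sum]
    simp only [Finset.mem_filter, Finset.mem_univ, true_and]
  rw [Finset.sum_congr rfl (fun j _ => step1 j), Finset.sum_comm]
  refine Finset.sum_congr rfl fun u _ => ?_
  rw [Finset.sum_comm]
  refine Finset.sum_congr rfl fun v _ => ?_
  by_cases ha : cubeAdj u v
  · simp only [ha, and_true, if_pos]
    rw [← Finset.card_filter]
    have hflt : (Finset.Icc 1 (2^n - 1)).filter
        (fun j => g u ∈ Finset.Icc 1 j ∧ g v ∉ Finset.Icc 1 j) = Finset.Icc (g u) (g v - 1) := by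
      ext j
      simp only [Finset.mem_filter, Finset.mem_Icc]
      have hu := hg u
      have hv := hg v
      have h1 : (1:ℕ) ≤ 2^n := Nat.one_le_two_pow
      omega
    rw [hflt, Nat.card_Icc]
    have hv := hg v
    omega
  · simp [ha]

def TB (n : ℕ) : ℕ := ∑ j ∈ Finset.range (2^n), B j

lemma B_pow (n : ℕ) : 2 * B (2^n) = n * 2^n := by
  induction n with
  | zero => simp [B_one]
  | succ n ih =>
      have hp : 2^(n+1) = 2 * 2^n := by rw [pow_succ]; ring
      rw [hp, B_two_mul]
      calc 2 * (2 * B (2^n) + 2^n) = 2 * (2 * B (2^n)) + 2 * 2^n := by ring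
        _ = 2 * (n * 2^n) + 2 * 2^n := by rw [ih]
        _ = (n+1) * (2 * 2^n) := by ring

lemma TB_succ (n : ℕ) : 2 * TB (n+1) = 8 * TB n + n * 2^n + 2 * (2^n * (2^n - 1)) := by
  have hp : 2^(n+1) = 2 * 2^n := by rw [pow_succ]; ring
  have hsplit : TB (n+1) = ∑ m ∈ Finset.range (2^n), (B (2*m) + B (2*m+1)) := by
    unfold TB
    rw [hp, sum_range_two_mul]
  have hper : ∀ m ∈ Finset.range (2^n), B (2*m) + B (2*m+1) = 3 * B m + B (m+1) + 2 * m := by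
    intro m _
    rw [B_two_mul, B_two_mul_add_one]
    ring
  rw [Finset.sum_congr rfl hper] at hsplit
  have hs1 : ∑ m ∈ Finset.range (2^n), (3 * B m + B (m+1) + 2 * m)
      = 3 * TB n + (∑ m ∈ Finset.range (2^n), B (m+1)) + 2 * ∑ m ∈ Finset.range (2^n), m := by
    rw [Finset.sum_add_distrib, Finset.sum_add_distrib, ← Finset.mul_sum, ← Finset.mul_sum]
    rfl
  have hs2 : ∑ m ∈ Finset.range (2^n), B (m+1) = TB n + B (2^n) := by
    have h1 := Finset.sum_range_succ B (2^n)
    have h2 := Finset.sum_range_succ' B (2^n)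
    unfold TB
    rw [B_zero] at h2
    omega
  have hgauss := Finset.sum_range_id_mul_two (2^n)
  have hBpow := B_pow n
  unfold TB at *
  omega

lemma TB_val (m : ℕ) : 2 * TB (m+1) = m * (2^m * (2^(m+1) - 1)) := by
  induction m with
  | zero =>
      have : TB 1 = B 0 + B 1 := by
        unfold TB
        rw [show (2:ℕ)^1 = 2 by norm_num]
        rw [Finset.sum_range_succ, Finset.sum_range_succ, Finset.sum_range_zero]
        omega
      simp [this, B_zero, B_one]
  | succ m ih =>
      have hstep := TB_succ (m+1)
      have hp1 : (2:ℕ)^(m+1) = 2 * 2^m := by rw [pow_succ]; ring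
      have hp2 : (2:ℕ)^(m+2) = 4 * 2^m := by rw [pow_succ, pow_succ]; ring
      have h1 : (1:ℕ) ≤ 2^m := Nat.one_le_two_pow
      rw [hp1] at ih hstep
      rw [(show (2:ℕ)^(m+1+1) = 2^(m+2) from rfl), hp2, hp1]
      zify [show (1:ℕ) ≤ 2*2^m by omega, show (1:ℕ) ≤ 4*2^m by omega] at ih hstep ⊢
      linear_combination hstep + 4*ih

/-- The Gray code labeling minimizes the total edge boundary over initial segments. -/
theorem stmt6 (n : ℕ) (hn : 2 ≤ n) (f : (Fin n → Bool) → ℕ)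
    (hf : Set.BijOn f Set.univ (Set.Icc 1 (2 ^ n))) :
    (∑ j ∈ Finset.Icc 1 (2 ^ n - 1),
        theta n (Finset.univ.filter fun v => f v ∈ Finset.Icc 1 j) ≥
      ∑ j ∈ Finset.Icc 1 (2 ^ n - 1),
        theta n (Finset.univ.filter fun v => gray n v ∈ Finset.Icc 1 j)) ∧
    (∑ j ∈ Finset.Icc 1 (2 ^ n - 1),
        theta n (Finset.univ.filter fun v => gray n v ∈ Finset.Icc 1 j) =
      2 ^ (2 * n - 1) - 2 ^ (n - 1)) := by
  obtain ⟨m, rfl⟩ : ∃ m, n = m + 1 := ⟨n - 1, by omega⟩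
  have h1q : (1:ℕ) ≤ 2^m := Nat.one_le_two_pow
  have hp1 : (2:ℕ)^(m+1) = 2 * 2^m := by rw [pow_succ]; ring
  have hNpos : (1:ℕ) ≤ 2^(m+1) := by omega
  -- abbreviations
  set F := ∑ j ∈ Finset.Icc 1 (2^(m+1) - 1),
    theta (m+1) (Finset.univ.filter fun v => f v ∈ Finset.Icc 1 j) with hF
  set Wg := ∑ j ∈ Finset.Icc 1 (2^(m+1) - 1),
    theta (m+1) (Finset.univ.filter fun v => gray (m+1) v ∈ Finset.Icc 1 j) with hWg
  set E := ∑ j ∈ Finset.Icc 1 (2^(m+1) - 1),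
    eSum (Finset.univ.filter fun v => f v ∈ Finset.Icc 1 j) with hE
  set sj := ∑ j ∈ Finset.Icc 1 (2^(m+1) - 1), j with hsj
  set tb := TB (m+1) with htb
  -- gray sum value
  have hgray : Wg = grayW (m+1) :=
    sum_theta_g (m+1) (gray (m+1)) (gray_bounds (m+1))
  have hW : 2 * Wg = 2^(m+1) * (2^(m+1) - 1) := by
    rw [hgray]; exact grayW_val (m+1)
  rw [hp1] at hW
  -- Gauss sum
  have hrange : Finset.range (2^(m+1)) = insert 0 (Finset.Icc 1 (2^(m+1) - 1)) := by
    ext x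
    simp only [Finset.mem_range, Finset.mem_insert, Finset.mem_Icc]
    omega
  have hIccJ : (∑ j ∈ Finset.range (2^(m+1)), j) = sj := by
    rw [hrange, Finset.sum_insert (by simp), zero_add, hsj]
  have hgauss := Finset.sum_range_id_mul_two (2^(m+1))
  rw [hIccJ, hp1] at hgauss
  -- value identities in ℕ
  have hsjval : sj = 2^m * (2*2^m - 1) := by
    have hr : (2*2^m) * (2*2^m - 1) = 2 * (2^m * (2*2^m - 1)) := by ring
    omega
  have hWgval : Wg = 2^m * (2*2^m - 1) := by
    have hr : (2*2^m) * (2*2^m - 1) = 2 * (2^m * (2*2^m - 1)) := by ring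
    omega
  have hexpand : 2^m * (2*2^m - 1) + 2^m = 2 * (2^m * 2^m) := by
    have h4 : 2^m * (2*2^m - 1) + 2^m = 2^m * ((2*2^m - 1) + 1) := by ring
    have h5 : 2*2^m - 1 + 1 = 2*2^m := by omega
    rw [h4, h5]; ring
  -- second component
  have hsecond : Wg = 2 ^ (2 * (m+1) - 1) - 2 ^ ((m+1) - 1) := by
    have hexp : (2:ℕ)^(2*(m+1)-1) = 2 * (2^m * 2^m) := by
      rw [show 2*(m+1)-1 = (m+1)+m by omega, pow_add, hp1]
      ring
    have hexp2 : (2:ℕ)^((m+1)-1) = 2^m := by norm_num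
    rw [hexp, hexp2]
    omega
  refine ⟨?_, hsecond⟩
  -- first component
  have hcard : ∀ j ∈ Finset.Icc 1 (2^(m+1) - 1),
      (Finset.univ.filter fun v => f v ∈ Finset.Icc 1 j).card = j := by
    intro j hj
    rw [Finset.mem_Icc] at hj
    exact card_level hf (by omega)
  have hhs : ∀ j ∈ Finset.Icc 1 (2^(m+1) - 1),
      theta (m+1) (Finset.univ.filter fun v => f v ∈ Finset.Icc 1 j)
        + eSum (Finset.univ.filter fun v => f v ∈ Finset.Icc 1 j) = (m+1) * j := by
    intro j hj
    rw [theta_handshake, hcard j hj]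
  have hsum : F + E = (m+1) * sj := by
    rw [hF, hE, hsj, ← Finset.sum_add_distrib, Finset.mul_sum]
    exact Finset.sum_congr rfl hhs
  have hIccB : (∑ j ∈ Finset.Icc 1 (2^(m+1) - 1), B j) = tb := by
    rw [htb]
    unfold TB
    rw [hrange, Finset.sum_insert (by simp), B_zero, zero_add]
  have hEb : E ≤ 2 * tb := by
    rw [hE, ← hIccB, Finset.mul_sum]
    refine Finset.sum_le_sum fun j hj => ?_
    have h := eSum_le (m+1) (Finset.univ.filter fun v => f v ∈ Finset.Icc 1 j)
    rwa [hcard j hj] at h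
  have hTB : 2 * tb = m * (2^m * (2*2^m - 1)) := by
    rw [htb]
    have h := TB_val m
    rwa [hp1] at h
  -- final chain: F + E = (m+1)*sj, E ≤ 2tb = m*(2^m*(2*2^m-1)), sj = Wg
  rw [hsjval] at hsum
  have hmul : (m+1) * (2^m * (2*2^m - 1))
      = m * (2^m * (2*2^m - 1)) + 2^m * (2*2^m - 1) := by ring
  rw [hmul] at hsum
  omega
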